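/- Let (mu, alpha) in Sigma_2^0 x Sigma_2^1 satisfy mu < sigma^i(mu) < alpha and mu <= sigma^j(alpha) < alpha for all i, j >= 1, with strictly increasing indices n_1 < n_2 < ... such that mu_{m+1}...mu_{n_k} > mu_1...mu_{n_k - m} for all 1 <= m < n_k (all k). Define mu^k := mu_1...mu_{n_k} (mu_1...mu_{n_{k+1}})^infty. Then mu^k < mu^{k+1} < mu lexicographically, mu^k converges to mu, and for all i >= 1: mu^k < sigma^i(mu^k) < alpha. -/
import Mathlib


/-- The one-sided left shift on binary sequences. -/
def shift (x : ℕ → Bool) : ℕ → Bool := fun n => x (n + 1)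

/-- Strict lexicographic order on binary sequences (`false < true`). -/
def lexLt (x y : ℕ → Bool) : Prop :=
  ∃ k : ℕ, (∀ i < k, x i = y i) ∧ x k < y k

/-- Non-strict lexicographic order on binary sequences. -/
def lexLe (x y : ℕ → Bool) : Prop := lexLt x y ∨ x = y

/-- Periodic sequence with period the first `P` symbols of `mu`. -/
def xPer (mu : ℕ → Bool) (P : ℕ) : ℕ → Bool := fun s => mu (s % P)

lemma shift_iter : ∀ (i : ℕ) (x : ℕ → Bool) (s : ℕ), shift^[i] x s = x (i + s)
  | 0, _, _ => by simp
  | (i+1), x, s => by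
    rw [Function.iterate_succ_apply, shift_iter i (shift x) s]
    show x (i + s + 1) = x (i + 1 + s)
    congr 1
    omega

lemma lexLt_trans {x y z : ℕ → Bool} (h1 : lexLt x y) (h2 : lexLt y z) : lexLt x z := by
  obtain ⟨a, ha, ha'⟩ := h1
  obtain ⟨b, hb, hb'⟩ := h2
  rcases lt_trichotomy a b with h | rfl | h
  · exact ⟨a, fun i hi => (ha i hi).trans (hb i (hi.trans h)), by rw [← hb a h]; exact ha'⟩
  · exact ⟨a, fun i hi => (ha i hi).trans (hb i hi), ha'.trans hb'⟩
  · exact ⟨b, fun i hi => (ha i (hi.trans h)).trans (hb i hi), by rw [ha b h]; exact hb'⟩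

lemma lexLt_irrefl {x : ℕ → Bool} (h : lexLt x x) : False := by
  obtain ⟨a, _, ha⟩ := h
  exact lt_irrefl _ ha

lemma lexLt_asymm {x y : ℕ → Bool} (h1 : lexLt x y) (h2 : lexLt y x) : False :=
  lexLt_irrefl (lexLt_trans h1 h2)

lemma lexLt_of_lt_of_le {x y z : ℕ → Bool} (h1 : lexLt x y) (h2 : lexLe y z) :
    lexLt x z := by
  rcases h2 with h | rfl
  · exact lexLt_trans h1 h
  · exact h1

lemma lexLt_total (x y : ℕ → Bool) : lexLt x y ∨ x = y ∨ lexLt y x := by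
  classical
  by_cases h : x = y
  · exact Or.inr (Or.inl h)
  have hex : ∃ k, x k ≠ y k := by
    by_contra hc
    push_neg at hc
    exact h (funext hc)
  set k := Nat.find hex with hk
  have hkspec : x k ≠ y k := Nat.find_spec hex
  have hag : ∀ i < k, x i = y i := by
    intro i hi
    have hm := Nat.find_min hex (show i < Nat.find hex by omega)
    exact not_not.mp hm
  cases hx : x k <;> cases hy : y k
  · exact absurd (hx.trans hy.symm) hkspec
  · exact Or.inl ⟨k, hag, by rw [hx, hy]; decide⟩
  · exact Or.inr (Or.inr ⟨k, fun i hi => (hag i hi).symm, by rw [hx, hy]; decide⟩)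
  · exact absurd (hx.trans hy.symm) hkspec

/-- Splicing lemma: a sequence agreeing with `alpha` on `[0,L)` with tail `xp`,
with `xp < shift^[L] alpha`, is `< alpha`. -/
lemma splice_lt (X al xp : ℕ → Bool) (L : ℕ)
    (h1 : ∀ s < L, X s = al s) (h2 : ∀ v, X (L + v) = xp v)
    (h3 : lexLt xp (shift^[L] al)) : lexLt X al := by
  obtain ⟨u, hag, hd⟩ := h3
  refine ⟨L + u, ?_, ?_⟩
  · intro s hs
    rcases lt_or_ge s L with h | h
    · exact h1 s h
    · obtain ⟨v, rfl⟩ : ∃ v, s = L + v := ⟨s - L, by omega⟩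
      rw [h2, hag v (by omega), shift_iter]
  · rw [h2 u]
    rw [shift_iter] at hd
    exact hd

/-- Case (ii) construction: `mu^k = mu_1…mu_{n_k} (mu_1…mu_{n_{k+1}})^∞` increases to
`mu` and each `(mu^k, alpha)` lies in `U'_2`. -/
theorem stmt18 (mu alpha : ℕ → Bool) (h0 : mu 0 = false) (ha0 : alpha 0 = true)
    (hU : ∀ i, 1 ≤ i → lexLt mu (shift^[i] mu) ∧ lexLt (shift^[i] mu) alpha)
    (hA : ∀ j, 1 ≤ j → lexLe mu (shift^[j] alpha) ∧ lexLt (shift^[j] alpha) alpha)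
    (n : ℕ → ℕ) (hmono : StrictMono n) (hn0 : 1 ≤ n 0)
    (hword : ∀ k, ∀ m, 1 ≤ m → m < n k →
      ∃ t < n k - m, (∀ s < t, mu s = mu (m + s)) ∧ mu t < mu (m + t))
    (muK : ℕ → ℕ → Bool)
    (hmuK : ∀ k, muK k = fun i => if i < n k then mu i else mu ((i - n k) % n (k + 1))) :
    (∀ k, lexLt (muK k) (muK (k + 1)) ∧ lexLt (muK k) mu) ∧
    (∀ N : ℕ, ∃ K, ∀ k ≥ K, ∀ i < N, muK k i = mu i) ∧
    (∀ k, ∀ i, 1 ≤ i → lexLt (muK k) (shift^[i] (muK k)) ∧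
      lexLt (shift^[i] (muK k)) alpha) := by
  classical
  have hN1 : ∀ k, 1 ≤ n k := fun k => hn0.trans (hmono.monotone (Nat.zero_le k))
  have hNP : ∀ k, n k < n (k + 1) := fun k => hmono (Nat.lt_succ_self k)
  have hlo : ∀ k i, i < n k → muK k i = mu i := by
    intro k i h
    rw [hmuK]
    simp [h]
  have hhi : ∀ k i, n k ≤ i → muK k i = mu ((i - n k) % n (k + 1)) := by
    intro k i h
    rw [hmuK]
    simp [Nat.not_lt.mpr h]
  have hxlo : ∀ k s, s < n (k + 1) → xPer mu (n (k + 1)) s = mu s := by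
    intro k s h
    unfold xPer
    rw [Nat.mod_eq_of_lt h]
  -- base witness : muK k agrees with mu then drops strictly, before position n (k+1)
  have hbase : ∀ k, ∃ w < n (k + 1), (∀ s < w, muK k s = mu s) ∧ muK k w < mu w := by
    intro k
    obtain ⟨t, ht, hag, hd⟩ := hword (k + 1) (n k) (hN1 k) (hNP k)
    have hNPk := hNP k
    refine ⟨n k + t, by omega, ?_, ?_⟩
    · intro s hs
      rcases lt_or_ge s (n k) with h | h
      · exact hlo k s h
      · rw [hhi k s h, Nat.mod_eq_of_lt (by omega), hag (s - n k) (by omega)]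
        congr 1
        omega
    · rw [hhi k _ (Nat.le_add_right _ _)]
      have h1 : n k + t - n k = t := by omega
      rw [h1, Nat.mod_eq_of_lt (by omega)]
      exact hd
  have hmuK_lt_mu : ∀ k, lexLt (muK k) mu := by
    intro k
    obtain ⟨w, _, h1, h2⟩ := hbase k
    exact ⟨w, h1, h2⟩
  have hmuK_lt_xP : ∀ k, lexLt (muK k) (xPer mu (n (k + 1))) := by
    intro k
    obtain ⟨w, hw, h1, h2⟩ := hbase k
    refine ⟨w, fun s hs => (h1 s hs).trans (hxlo k s (by omega)).symm, ?_⟩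
    rw [hxlo k w hw]
    exact h2
  -- the periodic sequence is < mu
  have hxP_lt_mu : ∀ k, lexLt (xPer mu (n (k + 1))) mu := by
    intro k
    have hP1 : 1 ≤ n (k + 1) := hN1 (k + 1)
    rcases lexLt_total (xPer mu (n (k + 1))) mu with h | h | h
    · exact h
    · exfalso
      have he : ∀ s, mu (s % n (k + 1)) = mu s := fun s => congrFun h s
      have hfix : shift^[n (k + 1)] mu = mu := by
        funext s
        rw [shift_iter, ← he (n (k + 1) + s), Nat.add_mod_left, he s]
      have hc := (hU (n (k + 1)) hP1).1
      rw [hfix] at hc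
      exact lexLt_irrefl hc
    · exfalso
      obtain ⟨t, hag, hd⟩ := h
      unfold xPer at hag hd
      have htP : n (k + 1) ≤ t := by
        by_contra hc
        push_neg at hc
        rw [Nat.mod_eq_of_lt hc] at hd
        exact lt_irrefl _ hd
      have hdm : n (k + 1) * (t / n (k + 1)) + t % n (k + 1) = t := Nat.div_add_mod t _
      have hrP : t % n (k + 1) < n (k + 1) := Nat.mod_lt _ (by omega)
      have hq1 : 1 ≤ t / n (k + 1) := (Nat.one_le_div_iff (by omega)).mpr htP
      have hi0P : n (k + 1) ≤ n (k + 1) * (t / n (k + 1)) := by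
        calc n (k + 1) = n (k + 1) * 1 := by ring
        _ ≤ n (k + 1) * (t / n (k + 1)) := Nat.mul_le_mul_left _ hq1
      have habs : lexLt (shift^[n (k + 1) * (t / n (k + 1))] mu) mu := by
        refine ⟨t % n (k + 1), ?_, ?_⟩
        · intro s hs
          rw [shift_iter, hag (n (k + 1) * (t / n (k + 1)) + s) (by omega),
            Nat.mul_add_mod, Nat.mod_eq_of_lt (by omega)]
        · rw [shift_iter, show n (k + 1) * (t / n (k + 1)) + t % n (k + 1) = t from hdm]
          exact hd
      exact lexLt_asymm (hU _ (by omega)).1 habs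
  have hxP_lt_shift_alpha : ∀ k L, 1 ≤ L → lexLt (xPer mu (n (k + 1))) (shift^[L] alpha) :=
    fun k L hL => lexLt_of_lt_of_le (hxP_lt_mu k) (hA L hL).1
  -- tail formula for shifts past n k
  have htail : ∀ k i, n k ≤ i → ∀ s,
      shift^[i] (muK k) s = mu (((i - n k) % n (k + 1) + s) % n (k + 1)) := by
    intro k i hi s
    rw [shift_iter, hhi k (i + s) (by omega), Nat.mod_add_mod,
      show i + s - n k = i - n k + s from by omega]
  -- Claim A : muK k < shift^[i] (muK k)
  have claimA : ∀ k i, 1 ≤ i → lexLt (muK k) (shift^[i] (muK k)) := by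
    intro k i hi1
    rcases lt_or_ge i (n k) with hiN | hiN
    · obtain ⟨t, ht, hag, hd⟩ := hword k i hi1 hiN
      refine ⟨t, ?_, ?_⟩
      · intro s hs
        rw [hlo k s (by omega), shift_iter, hlo k (i + s) (by omega)]
        exact hag s hs
      · rw [hlo k t (by omega), shift_iter, hlo k (i + t) (by omega)]
        exact hd
    · rcases Nat.eq_zero_or_pos ((i - n k) % n (k + 1)) with hr | hr
      · have he : shift^[i] (muK k) = xPer mu (n (k + 1)) := by
          funext s
          rw [htail k i hiN s, hr, Nat.zero_add]
          rfl
        rw [he]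
        exact hmuK_lt_xP k
      · refine lexLt_trans (hmuK_lt_mu k) ?_
        obtain ⟨t, ht, hag, hd⟩ :=
          hword (k + 1) ((i - n k) % n (k + 1)) hr (Nat.mod_lt _ (by have := hN1 (k+1); omega))
        refine ⟨t, ?_, ?_⟩
        · intro s hs
          rw [htail k i hiN s, Nat.mod_eq_of_lt (by omega)]
          exact hag s hs
        · rw [htail k i hiN t, Nat.mod_eq_of_lt (by omega)]
          exact hd
  -- Claim B : shift^[i] (muK k) < alpha
  have claimB : ∀ k i, 1 ≤ i → lexLt (shift^[i] (muK k)) alpha := by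
    intro k i hi1
    rcases lt_or_ge i (n k) with hiN | hiN
    · obtain ⟨t, hag, hd⟩ := (hU i hi1).2
      rcases lt_or_ge (i + t) (n k) with hc | hc
      · refine ⟨t, ?_, ?_⟩
        · intro s hs
          rw [shift_iter, hlo k (i + s) (by omega)]
          have h := hag s hs
          rw [shift_iter] at h
          exact h
        · rw [shift_iter, hlo k (i + t) (by omega)]
          rw [shift_iter] at hd
          exact hd
      · refine splice_lt _ _ (xPer mu (n (k + 1))) (n k - i) ?_ ?_
          (hxP_lt_shift_alpha k (n k - i) (by omega))
        · intro s hs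
          rw [shift_iter, hlo k (i + s) (by omega)]
          have h := hag s (by omega)
          rw [shift_iter] at h
          exact h
        · intro v
          rw [shift_iter, hhi k (i + (n k - i + v)) (by omega)]
          unfold xPer
          congr 1
          have h1 : i + (n k - i + v) - n k = v := by omega
          rw [h1]
    · rcases Nat.eq_zero_or_pos ((i - n k) % n (k + 1)) with hr | hr
      · have he : shift^[i] (muK k) = xPer mu (n (k + 1)) := by
          funext s
          rw [htail k i hiN s, hr, Nat.zero_add]
          rfl
        rw [he]
        refine ⟨0, fun s hs => absurd hs (Nat.not_lt_zero s), ?_⟩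
        show mu (0 % n (k + 1)) < alpha 0
        rw [Nat.zero_mod, h0, ha0]
        decide
      · have hrP : (i - n k) % n (k + 1) < n (k + 1) :=
          Nat.mod_lt _ (by have := hN1 (k+1); omega)
        obtain ⟨t, hag, hd⟩ := (hU ((i - n k) % n (k + 1)) hr).2
        rcases lt_or_ge t (n (k + 1) - (i - n k) % n (k + 1)) with hc | hc
        · refine ⟨t, ?_, ?_⟩
          · intro s hs
            rw [htail k i hiN s, Nat.mod_eq_of_lt (by omega)]
            have h := hag s hs
            rw [shift_iter] at h
            exact h
          · rw [htail k i hiN t, Nat.mod_eq_of_lt (by omega)]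
            rw [shift_iter] at hd
            exact hd
        · refine splice_lt _ _ (xPer mu (n (k + 1))) (n (k + 1) - (i - n k) % n (k + 1)) ?_ ?_
            (hxP_lt_shift_alpha k _ (by omega))
          · intro s hs
            rw [htail k i hiN s, Nat.mod_eq_of_lt (by omega)]
            have h := hag s (by omega)
            rw [shift_iter] at h
            exact h
          · intro v
            rw [htail k i hiN _]
            unfold xPer
            congr 1
            rw [show (i - n k) % n (k + 1) + (n (k + 1) - (i - n k) % n (k + 1) + v)
              = n (k + 1) + v from by omega, Nat.add_mod_left]
  refine ⟨?_, ?_, ?_⟩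
  · intro k
    refine ⟨?_, hmuK_lt_mu k⟩
    obtain ⟨w, hw, h1, h2⟩ := hbase k
    refine ⟨w, ?_, ?_⟩
    · intro s hs
      rw [h1 s hs, hlo (k + 1) s (by omega)]
    · rw [hlo (k + 1) w hw]
      exact h2
  · intro N
    refine ⟨N, fun k hk i hiN => hlo k i ?_⟩
    have h : k ≤ n k := hmono.le_apply
    omega
  · intro k i hi
    exact ⟨claimA k i hi, claimB k i hi⟩
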